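/- Let X ∈ ℝ^{m×n} have nonzero, pairwise orthogonal columns (so XᵀX is a diagonal matrix with strictly positive diagonal entries). Then the AOL preconditioning is exact: with s_i = (Σ_{j=1}^{n} |(XᵀX)_{ij}|)^{−1/2} and S = diag(s), the matrix X·S has orthonormal columns, i.e., (X·S)ᵀ(X·S) = I, and X·S = PolarFactor(X). -/

import Mathlib

open Matrix
open scoped Matrix.Norms.L2Operator

/-- The spectral norm (`ℓ2 → ℓ2` operator norm) of a real matrix, i.e. its largest
singular value.  This is Mathlib's scoped L2 operator norm on matrices. -/
noncomputable def matrixSpectralNorm {m n : ℕ} (M : Matrix (Fin m) (Fin n) ℝ) : ℝ := ‖M‖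

open Classical in
/-- The unique symmetric positive semidefinite square root of a positive semidefinite
real matrix (junk value `0` if the input is not positive semidefinite). -/
noncomputable def matrixSqrt {n : ℕ} (A : Matrix (Fin n) (Fin n) ℝ) :
    Matrix (Fin n) (Fin n) ℝ :=
  if h : A.PosSemidef then
    h.1.eigenvectorUnitary.1 * diagonal ((↑) ∘ (Real.sqrt ·) ∘ h.1.eigenvalues) *
      (star h.1.eigenvectorUnitary : Matrix (Fin n) (Fin n) ℝ)
  else 0

/-- The polar factor `X (XᵀX)^{-1/2}` of a matrix `X` with full column rank. -/
noncomputable def polarFactor {m n : ℕ} (X : Matrix (Fin m) (Fin n) ℝ) :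
    Matrix (Fin m) (Fin n) ℝ :=
  X * (matrixSqrt (Xᵀ * X))⁻¹

/-- The Frobenius inner product `⟨A, B⟩_F = tr(Aᵀ B)`. -/
noncomputable def frobInner {m n : ℕ} (A B : Matrix (Fin m) (Fin n) ℝ) : ℝ :=
  (Aᵀ * B).trace

/-- On matrices with nonzero pairwise orthogonal columns, AOL preconditioning is exact:
`X·S` has orthonormal columns and equals the polar factor of `X`. -/
theorem stmt_8 {m n : ℕ} (X : Matrix (Fin m) (Fin n) ℝ)
    (hcol : ∀ j : Fin n, (fun i => X i j) ≠ 0)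
    (horth : ∀ j k : Fin n, j ≠ k → ∑ i, X i j * X i k = 0)
    (s : Fin n → ℝ) (hs : ∀ i, s i = (∑ j, |(Xᵀ * X) i j|) ^ (-(1 / 2 : ℝ))) :
    let S : Matrix (Fin n) (Fin n) ℝ := Matrix.diagonal s
    (X * S)ᵀ * (X * S) = 1 ∧ X * S = polarFactor X := by
  intro S
  set d : Fin n → ℝ := fun j => ∑ i, X i j * X i j with hd
  have hG : Xᵀ * X = Matrix.diagonal d := by
    ext j k
    by_cases h : j = k
    · subst h; simp [Matrix.mul_apply, Matrix.diagonal, hd, Matrix.transpose_apply]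
    · simp [Matrix.mul_apply, Matrix.diagonal, h, Matrix.transpose_apply, horth j k h]
  have hdpos : ∀ j, 0 < d j := by
    intro j
    have hnn : 0 ≤ d j := Finset.sum_nonneg fun i _ => mul_self_nonneg _
    rcases hnn.lt_or_eq with h | h
    · exact h
    · exfalso
      apply hcol j
      funext i
      have := (Finset.sum_eq_zero_iff_of_nonneg (fun i _ => mul_self_nonneg (X i j))).mp h.symm i (Finset.mem_univ i)
      simpa [mul_self_eq_zero] using this
  have hs' : ∀ i, s i = (Real.sqrt (d i))⁻¹ := by
    intro i
    rw [hs i, hG]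
    have hsum : (∑ j, |Matrix.diagonal d i j|) = d i := by
      rw [Finset.sum_eq_single i]
      · simp [Matrix.diagonal, abs_of_pos (hdpos i)]
      · intro b _ hb; simp [Matrix.diagonal, Ne.symm hb]
      · simp
    rw [hsum, Real.rpow_neg (hdpos i).le, ← Real.sqrt_eq_rpow]
  have hsq : ∀ i, s i * (d i * s i) = 1 := by
    intro i
    rw [hs' i]
    have h1 : Real.sqrt (d i) * Real.sqrt (d i) = d i := Real.mul_self_sqrt (hdpos i).le
    have h2 : Real.sqrt (d i) ≠ 0 := by
      have := Real.sqrt_pos.mpr (hdpos i); linarith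
    field_simp
    rw [Real.sq_sqrt (hdpos i).le]
  have hfirst : (X * S)ᵀ * (X * S) = 1 := by
    have : (X * S)ᵀ * (X * S) = Sᵀ * (Xᵀ * X) * S := by
      rw [Matrix.transpose_mul]; simp only [Matrix.mul_assoc]
    rw [this, hG]
    simp only [S, Matrix.diagonal_transpose, Matrix.diagonal_mul_diagonal]
    rw [show (fun i => s i * d i * s i) = fun _ => (1:ℝ) from
      funext fun i => by rw [mul_assoc]; exact hsq i, Matrix.diagonal_one]
  refine ⟨hfirst, ?_⟩
  -- sqrt
  have hPSD : (Xᵀ * X).PosSemidef := Matrix.posSemidef_conjTranspose_mul_self X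
  have hdiagPSD : (Matrix.diagonal (fun i => Real.sqrt (d i))).PosSemidef :=
    Matrix.posSemidef_diagonal_iff.mpr fun i => Real.sqrt_nonneg _
  open scoped MatrixOrder in
  have hsqrt : matrixSqrt (Xᵀ * X) = Matrix.diagonal (fun i => Real.sqrt (d i)) := by
    have hA : matrixSqrt (Xᵀ * X) = CFC.sqrt (Xᵀ * X) := by
      rw [CFC.sqrt_eq_real_sqrt (Xᵀ * X) (Matrix.nonneg_iff_posSemidef.mpr hPSD), cfcₙ_eq_cfc,
        hPSD.1.cfc_eq, matrixSqrt, dif_pos hPSD]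
      simp [IsHermitian.cfc, Unitary.conjStarAlgAut_apply]
      rfl
    rw [hA]
    refine CFC.sqrt_unique ?_ (Matrix.nonneg_iff_posSemidef.mpr hdiagPSD)
    rw [Matrix.diagonal_mul_diagonal, hG]
    rw [show (fun i => Real.sqrt (d i) * Real.sqrt (d i)) = d from
      funext fun i => Real.mul_self_sqrt (hdpos i).le]
  have hinv : (Matrix.diagonal (fun i => Real.sqrt (d i)))⁻¹
      = Matrix.diagonal (fun i => (Real.sqrt (d i))⁻¹) := by
    apply Matrix.inv_eq_right_inv
    rw [Matrix.diagonal_mul_diagonal,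
      show (fun i => Real.sqrt (d i) * (Real.sqrt (d i))⁻¹) = fun _ => (1:ℝ) from
        funext fun i => mul_inv_cancel₀ (ne_of_gt (Real.sqrt_pos.mpr (hdpos i))),
      Matrix.diagonal_one]
  rw [polarFactor, hsqrt, hinv]
  have : s = fun i => (Real.sqrt (d i))⁻¹ := funext fun i => hs' i
  show X * Matrix.diagonal s = _
  rw [this]
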